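/- Let n ∈ ℕ and let F = FreeGroup (Fin n) be the free group of rank n, with abelianization map σ : F → (Fin n → ℤ) sending a word to its vector of exponent sums. Let Φ : (Fin n → ℤ)³ → ℂ be additive in each of its three variables and alternating (Φ vanishes whenever two arguments coincide). Then there exists a parallelogram function f : F → ℂ such that f∘ε₃(a,b,c) = Φ(σ(a), σ(b), σ(c)) for all a, b, c ∈ F. -/

import Mathlib

/-- The linearization of `f : Γ → ℂ` to a linear functional on the group algebra `ℂ[Γ]`. -/
noncomputable def lin {Γ : Type*} [Group Γ] (f : Γ → ℂ) : MonoidAlgebra ℂ Γ →ₗ[ℂ] ℂ :=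
  Finsupp.linearCombination ℂ f ∘ₗ (MonoidAlgebra.coeffLinearEquiv ℂ).toLinearMap

/-- `f∘ε₃(a,b,c) = f̂((a-1)(b-1)(c-1))`. -/
noncomputable def eps3 {Γ : Type*} [Group Γ] (f : Γ → ℂ) (a b c : Γ) : ℂ :=
  lin f ((MonoidAlgebra.of ℂ Γ a - 1) * (MonoidAlgebra.of ℂ Γ b - 1) *
    (MonoidAlgebra.of ℂ Γ c - 1))

/-- The abelianization map of the free group of rank `n`, sending a word to its
vector of exponent sums. -/
noncomputable def expSum (n : ℕ) : FreeGroup (Fin n) →* Multiplicative (Fin n → ℤ) :=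
  FreeGroup.lift fun i => Multiplicative.ofAdd (Pi.single i 1)

structure PH (n : ℕ) where
  s : Fin n → ℤ
  m : Fin n → Fin n → ℤ

namespace PH
variable {n : ℕ}

private lemma ext' {a b : PH n} (h1 : a.s = b.s) (h2 : a.m = b.m) : a = b := by
  cases a; cases b; simp_all

def gmul (a b : PH n) : PH n := ⟨a.s + b.s, a.m + b.m + fun i j => a.s i * b.s j⟩
def gone : PH n := ⟨0, 0⟩
def ginv (a : PH n) : PH n := ⟨-a.s, -a.m + fun i j => a.s i * a.s j⟩

instance : Group (PH n) where
  mul := gmul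
  one := gone
  inv := ginv
  mul_assoc a b c := by
    show gmul (gmul a b) c = gmul a (gmul b c)
    refine ext' ?_ ?_ <;> funext i <;> [skip; funext j] <;> simp [gmul] <;> ring
  one_mul a := by
    show gmul gone a = a
    refine ext' ?_ ?_ <;> funext i <;> [skip; funext j] <;> simp [gmul, gone]
  mul_one a := by
    show gmul a gone = a
    refine ext' ?_ ?_ <;> funext i <;> [skip; funext j] <;> simp [gmul, gone]
  inv_mul_cancel a := by
    show gmul (ginv a) a = gone
    refine ext' ?_ ?_ <;> funext i <;> [skip; funext j] <;> simp [gmul, gone, ginv] <;> ring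

@[simp] lemma mul_s (a b : PH n) : (a * b).s = a.s + b.s := rfl
@[simp] lemma mul_m (a b : PH n) (i j : Fin n) : (a * b).m i j = a.m i j + b.m i j + a.s i * b.s j := rfl
@[simp] lemma one_s : (1 : PH n).s = 0 := rfl
@[simp] lemma one_m : (1 : PH n).m = 0 := rfl
@[simp] lemma inv_s (a : PH n) : (a⁻¹).s = -a.s := rfl
@[simp] lemma inv_m (a : PH n) (i j : Fin n) : (a⁻¹).m i j = -a.m i j + a.s i * a.s j := rfl

end PH

noncomputable def hmap (n : ℕ) : FreeGroup (Fin n) →* PH n :=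
  FreeGroup.lift fun i => ⟨Pi.single i 1, 0⟩

/-- projection to abelianization -/
def projS (n : ℕ) : PH n →* Multiplicative (Fin n → ℤ) where
  toFun a := Multiplicative.ofAdd a.s
  map_one' := by simp
  map_mul' a b := by simp

lemma projS_hmap (n : ℕ) (w : FreeGroup (Fin n)) :
    Multiplicative.toAdd (expSum n w) = (hmap n w).s := by
  have : (projS n).comp (hmap n) = expSum n := by
    ext i
    simp [projS, hmap, expSum, FreeGroup.lift_apply_of]
    rfl
  rw [← this]
  rfl

lemma additive_expand {n : ℕ} (φ : (Fin n → ℤ) → ℂ)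
    (hφ : ∀ a b, φ (a + b) = φ a + φ b) (x : Fin n → ℤ) :
    φ x = ∑ i, (x i : ℂ) * φ (Pi.single i 1) := by
  let ψ : (Fin n → ℤ) →+ ℂ := AddMonoidHom.mk' φ (fun a b => hφ a b)
  have hx : x = ∑ i, (x i) • Pi.single i (1 : ℤ) := by
    funext j
    simp [Finset.sum_apply, Pi.single_apply]
  calc φ x = ψ x := rfl
    _ = ∑ i, (x i : ℂ) * ψ (Pi.single i 1) := by
        conv_lhs => rw [hx]
        rw [map_sum]
        refine Finset.sum_congr rfl fun i _ => ?_
        rw [map_zsmul, zsmul_eq_mul]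
    _ = ∑ i, (x i : ℂ) * φ (Pi.single i 1) := rfl

noncomputable def Sg (n : ℕ) (w : FreeGroup (Fin n)) : Fin n → ℤ := (hmap n w).s
noncomputable def Mg (n : ℕ) (w : FreeGroup (Fin n)) (i j : Fin n) : ℤ := (hmap n w).m i j

lemma Sg_mul {n : ℕ} (u v : FreeGroup (Fin n)) : Sg n (u * v) = Sg n u + Sg n v := by
  unfold Sg; rw [map_mul]; rfl

lemma Mg_mul {n : ℕ} (u v : FreeGroup (Fin n)) (i j : Fin n) :
    Mg n (u * v) i j = Mg n u i j + Mg n v i j + Sg n u i * Sg n v j := by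
  unfold Mg Sg; rw [map_mul]; rfl

lemma Sg_inv {n : ℕ} (u : FreeGroup (Fin n)) : Sg n u⁻¹ = -Sg n u := by
  unfold Sg; rw [map_inv]; rfl

lemma Mg_inv {n : ℕ} (u : FreeGroup (Fin n)) (i j : Fin n) :
    Mg n u⁻¹ i j = -Mg n u i j + Sg n u i * Sg n u j := by
  unfold Mg Sg; rw [map_inv]; rfl

lemma Sg_one {n : ℕ} : Sg n 1 = 0 := by unfold Sg; rw [map_one]; rfl

lemma Mg_one {n : ℕ} (i j : Fin n) : Mg n 1 i j = 0 := by unfold Mg; rw [map_one]; rfl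

section main
variable {n : ℕ} (Φ : (Fin n → ℤ) → (Fin n → ℤ) → (Fin n → ℤ) → ℂ)

noncomputable def fP (w : FreeGroup (Fin n)) : ℂ :=
  ∑ i, ∑ j, (Mg n w i j : ℂ) * Φ (Pi.single i 1) (Pi.single j 1) (Sg n w)

noncomputable def gP (u v : FreeGroup (Fin n)) : ℂ :=
  ∑ i, ∑ j, ((Mg n u i j : ℂ) * Φ (Pi.single i 1) (Pi.single j 1) (Sg n v)
    + (Mg n v i j : ℂ) * Φ (Pi.single i 1) (Pi.single j 1) (Sg n u))

variable (hadd1 : ∀ x x' y z, Φ (x + x') y z = Φ x y z + Φ x' y z)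
    (hadd2 : ∀ x y y' z, Φ x (y + y') z = Φ x y z + Φ x y' z)
    (hadd3 : ∀ x y z z', Φ x y (z + z') = Φ x y z + Φ x y z')
    (halt12 : ∀ x z, Φ x x z = 0)
    (halt23 : ∀ x y, Φ x y y = 0)
    (halt13 : ∀ x y, Φ x y x = 0)

include hadd1 hadd2 in
lemma expand2 (x y z : Fin n → ℤ) :
    Φ x y z = ∑ i, ∑ j, (x i : ℂ) * (y j : ℂ) * Φ (Pi.single i 1) (Pi.single j 1) z := by
  rw [additive_expand (fun a => Φ a y z) (fun a b => hadd1 a b y z) x]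
  refine Finset.sum_congr rfl fun i _ => ?_
  rw [additive_expand (fun b => Φ (Pi.single i 1) b z) (fun a b => hadd2 _ a b z) y,
    Finset.mul_sum]
  exact Finset.sum_congr rfl fun j _ => by ring

include hadd3 in
lemma neg3 (x y z : Fin n → ℤ) : Φ x y (-z) = -Φ x y z := by
  have h0 : Φ x y 0 = 0 := by have := hadd3 x y 0 0; simpa using this
  have := hadd3 x y z (-z)
  simp [h0] at this
  linear_combination -this

include hadd1 hadd2 hadd3 halt23 halt13 in
lemma fP_mul (u v : FreeGroup (Fin n)) :
    fP Φ (u * v) = fP Φ u + fP Φ v + gP Φ u v := by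
  unfold fP gP
  calc ∑ i, ∑ j, (Mg n (u*v) i j : ℂ) * Φ (Pi.single i 1) (Pi.single j 1) (Sg n (u*v))
      = ∑ i, ∑ j, ((Mg n u i j : ℂ) * Φ (Pi.single i 1) (Pi.single j 1) (Sg n u)
          + (Mg n v i j : ℂ) * Φ (Pi.single i 1) (Pi.single j 1) (Sg n v)
          + ((Mg n u i j : ℂ) * Φ (Pi.single i 1) (Pi.single j 1) (Sg n v)
            + (Mg n v i j : ℂ) * Φ (Pi.single i 1) (Pi.single j 1) (Sg n u))
          + (Sg n u i : ℂ) * (Sg n v j : ℂ) * Φ (Pi.single i 1) (Pi.single j 1) (Sg n u)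
          + (Sg n u i : ℂ) * (Sg n v j : ℂ) * Φ (Pi.single i 1) (Pi.single j 1) (Sg n v)) := by
        refine Finset.sum_congr rfl fun i _ => Finset.sum_congr rfl fun j _ => ?_
        rw [Mg_mul, Sg_mul, hadd3]
        push_cast
        ring
    _ = (∑ i, ∑ j, (Mg n u i j : ℂ) * Φ (Pi.single i 1) (Pi.single j 1) (Sg n u))
        + (∑ i, ∑ j, (Mg n v i j : ℂ) * Φ (Pi.single i 1) (Pi.single j 1) (Sg n v))
        + (∑ i, ∑ j, ((Mg n u i j : ℂ) * Φ (Pi.single i 1) (Pi.single j 1) (Sg n v)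
            + (Mg n v i j : ℂ) * Φ (Pi.single i 1) (Pi.single j 1) (Sg n u)))
        + Φ (Sg n u) (Sg n v) (Sg n u) + Φ (Sg n u) (Sg n v) (Sg n v) := by
        rw [expand2 Φ hadd1 hadd2 (Sg n u) (Sg n v) (Sg n u),
          expand2 Φ hadd1 hadd2 (Sg n u) (Sg n v) (Sg n v)]
        simp only [Finset.sum_add_distrib]
    _ = _ := by rw [halt13, halt23]; ring

include hadd1 hadd2 hadd3 halt12 in
lemma fP_inv (u : FreeGroup (Fin n)) : fP Φ u⁻¹ = fP Φ u := by
  unfold fP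
  calc ∑ i, ∑ j, (Mg n u⁻¹ i j : ℂ) * Φ (Pi.single i 1) (Pi.single j 1) (Sg n u⁻¹)
      = ∑ i, ∑ j, ((Mg n u i j : ℂ) * Φ (Pi.single i 1) (Pi.single j 1) (Sg n u)
          - (Sg n u i : ℂ) * (Sg n u j : ℂ) * Φ (Pi.single i 1) (Pi.single j 1) (Sg n u)) := by
        refine Finset.sum_congr rfl fun i _ => Finset.sum_congr rfl fun j _ => ?_
        rw [Mg_inv, Sg_inv, neg3 Φ hadd3]
        push_cast
        ring
    _ = (∑ i, ∑ j, (Mg n u i j : ℂ) * Φ (Pi.single i 1) (Pi.single j 1) (Sg n u))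
        - Φ (Sg n u) (Sg n u) (Sg n u) := by
        rw [expand2 Φ hadd1 hadd2 (Sg n u) (Sg n u) (Sg n u)]
        simp only [Finset.sum_sub_distrib]
    _ = _ := by rw [halt12]; ring

include hadd1 hadd2 hadd3 halt12 in
lemma gP_add_inv (x y : FreeGroup (Fin n)) : gP Φ x y + gP Φ x y⁻¹ = 0 := by
  unfold gP
  rw [← Finset.sum_add_distrib]
  have : ∀ i : Fin n, (∑ j, ((Mg n x i j : ℂ) * Φ (Pi.single i 1) (Pi.single j 1) (Sg n y)
      + (Mg n y i j : ℂ) * Φ (Pi.single i 1) (Pi.single j 1) (Sg n x)))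
      + (∑ j, ((Mg n x i j : ℂ) * Φ (Pi.single i 1) (Pi.single j 1) (Sg n y⁻¹)
      + (Mg n y⁻¹ i j : ℂ) * Φ (Pi.single i 1) (Pi.single j 1) (Sg n x)))
      = ∑ j, (Sg n y i : ℂ) * (Sg n y j : ℂ) * Φ (Pi.single i 1) (Pi.single j 1) (Sg n x) := by
    intro i
    rw [← Finset.sum_add_distrib]
    refine Finset.sum_congr rfl fun j _ => ?_
    rw [Mg_inv, Sg_inv, neg3 Φ hadd3]
    push_cast
    ring
  calc (∑ i, _) = ∑ i, ∑ j, (Sg n y i : ℂ) * (Sg n y j : ℂ) * Φ (Pi.single i 1) (Pi.single j 1) (Sg n x) :=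
        Finset.sum_congr rfl fun i _ => this i
    _ = Φ (Sg n y) (Sg n y) (Sg n x) := (expand2 Φ hadd1 hadd2 _ _ _).symm
    _ = 0 := halt12 _ _

lemma fP_one : fP Φ 1 = 0 := by
  unfold fP
  simp [Mg_one]

end main

lemma lin_of {Γ : Type*} [Group Γ] (f : Γ → ℂ) (γ : Γ) :
    lin f (MonoidAlgebra.of ℂ Γ γ) = f γ := by
  show Finsupp.linearCombination ℂ f (Finsupp.single γ 1) = f γ
  rw [Finsupp.linearCombination_single, one_smul]

lemma lin_one {Γ : Type*} [Group Γ] (f : Γ → ℂ) : lin f 1 = f 1 := by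
  rw [← map_one (MonoidAlgebra.of ℂ Γ)] ; exact lin_of f 1

lemma eps3_eq {Γ : Type*} [Group Γ] (f : Γ → ℂ) (a b c : Γ) :
    eps3 f a b c = f (a * b * c) - f (a * b) - f (a * c) - f (b * c)
      + f a + f b + f c - f 1 := by
  have h : (MonoidAlgebra.of ℂ Γ a - 1) * (MonoidAlgebra.of ℂ Γ b - 1) *
      (MonoidAlgebra.of ℂ Γ c - 1)
      = MonoidAlgebra.of ℂ Γ (a * b * c) - MonoidAlgebra.of ℂ Γ (a * b)
        - MonoidAlgebra.of ℂ Γ (a * c) - MonoidAlgebra.of ℂ Γ (b * c)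
        + MonoidAlgebra.of ℂ Γ a + MonoidAlgebra.of ℂ Γ b + MonoidAlgebra.of ℂ Γ c - 1 := by
    simp only [map_mul]
    noncomm_ring
  rw [eps3, h]
  simp only [map_sub, map_add, lin_of, lin_one]

section main2
variable {n : ℕ} (Φ : (Fin n → ℤ) → (Fin n → ℤ) → (Fin n → ℤ) → ℂ)
    (hadd1 : ∀ x x' y z, Φ (x + x') y z = Φ x y z + Φ x' y z)
    (hadd2 : ∀ x y y' z, Φ x (y + y') z = Φ x y z + Φ x y' z)
    (hadd3 : ∀ x y z z', Φ x y (z + z') = Φ x y z + Φ x y z')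
    (halt12 : ∀ x z, Φ x x z = 0)
    (halt23 : ∀ x y, Φ x y y = 0)
    (halt13 : ∀ x y, Φ x y x = 0)

include hadd1 hadd2 hadd3 in
lemma gP_delta (a b c : FreeGroup (Fin n)) :
    gP Φ (a * b) c = gP Φ a c + gP Φ b c + Φ (Sg n a) (Sg n b) (Sg n c) := by
  unfold gP
  rw [expand2 Φ hadd1 hadd2 (Sg n a) (Sg n b) (Sg n c)]
  simp only [← Finset.sum_add_distrib]
  refine Finset.sum_congr rfl fun i _ => Finset.sum_congr rfl fun j _ => ?_
  rw [Mg_mul, Sg_mul, hadd3]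
  push_cast
  ring

lemma Sg_eq (w : FreeGroup (Fin n)) : Sg n w = Multiplicative.toAdd (expSum n w) :=
  (projS_hmap n w).symm

end main2

theorem exists_parallelogram_realizing_alternating_form (n : ℕ)
    (Φ : (Fin n → ℤ) → (Fin n → ℤ) → (Fin n → ℤ) → ℂ)
    (hadd1 : ∀ x x' y z, Φ (x + x') y z = Φ x y z + Φ x' y z)
    (hadd2 : ∀ x y y' z, Φ x (y + y') z = Φ x y z + Φ x y' z)
    (hadd3 : ∀ x y z z', Φ x y (z + z') = Φ x y z + Φ x y z')
    (halt12 : ∀ x z, Φ x x z = 0)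
    (halt23 : ∀ x y, Φ x y y = 0)
    (halt13 : ∀ x y, Φ x y x = 0) :
    ∃ f : FreeGroup (Fin n) → ℂ,
      (∀ x y : FreeGroup (Fin n), f (x * y) + f (x * y⁻¹) = 2 * f x + 2 * f y) ∧
      (∀ a b c : FreeGroup (Fin n),
        eps3 f a b c =
          Φ (Multiplicative.toAdd (expSum n a)) (Multiplicative.toAdd (expSum n b))
            (Multiplicative.toAdd (expSum n c))) := by
  refine ⟨fP Φ, fun x y => ?_, fun a b c => ?_⟩
  · have h1 := fP_mul Φ hadd1 hadd2 hadd3 halt23 halt13 x y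
    have h2 := fP_mul Φ hadd1 hadd2 hadd3 halt23 halt13 x y⁻¹
    have h3 := fP_inv Φ hadd1 hadd2 hadd3 halt12 y
    have h4 := gP_add_inv Φ hadd1 hadd2 hadd3 halt12 x y
    linear_combination h1 + h2 + h3 + h4
  · rw [eps3_eq, show a * b * c = (a * b) * c from rfl,
      fP_mul Φ hadd1 hadd2 hadd3 halt23 halt13 (a * b) c,
      fP_mul Φ hadd1 hadd2 hadd3 halt23 halt13 a b,
      fP_mul Φ hadd1 hadd2 hadd3 halt23 halt13 a c,
      fP_mul Φ hadd1 hadd2 hadd3 halt23 halt13 b c,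
      fP_one, gP_delta Φ hadd1 hadd2 hadd3,
      ← Sg_eq, ← Sg_eq, ← Sg_eq]
    ring
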